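/- Jeffrey–Kirwan residue via normal forms. Let 𝔄 = [α₁,…,αₙ] (n ≥ r) be a polarized list of nonzero vectors in ℝʳ, let ε ∈ ℝʳ be regular with respect to 𝔄, and let J ⊆ {1,…,n} be such that (αⱼ)_{j∈J} is a basis of ℝʳ with ε ∈ Cone(αⱼ : j ∈ J). Let λ be a Jeffrey–Kirwan functional for (𝔄, ε). Fix a monomial order on ℝ[x₁,…,x_r], let P be a homogeneous polynomial of degree n − r, let N_P be a normal form of P with respect to I_{𝔄,ε}, and let N_Δ be a normal form of Δ = ∏_{i∉J} αᵢ with respect to I_{𝔄,ε}. Then N_Δ ≠ 0 and √(det[⟨αⱼ, α_k⟩]_{j,k∈J}) · λ(P/∏ᵢ₌₁ⁿ αᵢ) · N_Δ = N_P as polynomials; equivalently, λ(P/∏ᵢ₌₁ⁿ αᵢ) = (1/√(det[⟨αⱼ, α_k⟩]_{j,k∈J})) · N_P/N_Δ. -/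

import Mathlib

open MvPolynomial

noncomputable section

/-- The standard inner product on `ℝʳ`. -/
def dotp {r : ℕ} (v w : Fin r → ℝ) : ℝ := ∑ i, v i * w i

/-- The linear polynomial `v₁x₁ + … + v_r x_r` associated to a vector `v ∈ ℝʳ`. -/
def linPoly {r : ℕ} (v : Fin r → ℝ) : MvPolynomial (Fin r) ℝ := ∑ i, C (v i) * X i

/-- The fraction field of `ℝ[x₁,…,x_r]`. -/
abbrev Frac (r : ℕ) := FractionRing (MvPolynomial (Fin r) ℝ)

/-- The canonical embedding of `ℝ[x₁,…,x_r]` into its fraction field. -/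
def emb {r : ℕ} (p : MvPolynomial (Fin r) ℝ) : Frac r := algebraMap _ _ p

/-- A real constant viewed inside the fraction field `Frac r`. -/
def cst {r : ℕ} (a : ℝ) : Frac r := emb (C a)

/-- `v` lies in the cone generated by the vectors `α i`, `i ∈ s`. -/
def InCone {r n : ℕ} (α : Fin n → Fin r → ℝ) (s : Finset (Fin n)) (v : Fin r → ℝ) : Prop :=
  ∃ c : Fin n → ℝ, (∀ i ∈ s, 0 ≤ c i) ∧ v = ∑ i ∈ s, c i • α i

/-- The cone generated by the vectors `α i`, `i ∈ s`, as a set. -/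
def coneSet {r n : ℕ} (α : Fin n → Fin r → ℝ) (s : Finset (Fin n)) : Set (Fin r → ℝ) :=
  {v | InCone α s v}

/-- The list `α` is polarized: some `ξ` pairs strictly positively with every `α i`. -/
def Polarized {r n : ℕ} (α : Fin n → Fin r → ℝ) : Prop :=
  ∃ ξ : Fin r → ℝ, ∀ i, 0 < dotp (α i) ξ

/-- `ε` is regular with respect to the list `α`: it lies in no proper subspace spanned by a
subset of the list. -/
def RegularWrt {r n : ℕ} (α : Fin n → Fin r → ℝ) (ε : Fin r → ℝ) : Prop :=
  ∀ s : Set (Fin n), Submodule.span ℝ (α '' s) ≠ ⊤ → ε ∉ Submodule.span ℝ (α '' s)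

/-- A set of indices is generating if the corresponding vectors span `ℝʳ`. -/
def Generating {r n : ℕ} (α : Fin n → Fin r → ℝ) (J : Set (Fin n)) : Prop :=
  Submodule.span ℝ (α '' J) = ⊤

/-- The fraction `P / ∏ᵢ αᵢ^{mᵢ}` in the fraction field. -/
def fracOf {r n : ℕ} (α : Fin n → Fin r → ℝ) (P : MvPolynomial (Fin r) ℝ) (m : Fin n → ℕ) :
    Frac r :=
  emb P / ∏ i, emb (linPoly (α i)) ^ m i

/-- `R_𝔄`: the span of all fractions `P / ∏ᵢ αᵢ^{mᵢ}`. -/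
def Rspace {r n : ℕ} (α : Fin n → Fin r → ℝ) : Submodule ℝ (Frac r) :=
  Submodule.span ℝ {x | ∃ P m, x = fracOf α P m}

/-- `G_𝔄`: the span of the fractions `1 / ∏ᵢ αᵢ^{mᵢ}` with generating support. -/
def Gspace {r n : ℕ} (α : Fin n → Fin r → ℝ) : Submodule ℝ (Frac r) :=
  Submodule.span ℝ {x | ∃ m : Fin n → ℕ, Generating α {i | 0 < m i} ∧ x = fracOf α 1 m}

/-- `NG_𝔄`: the span of the fractions `P / ∏ᵢ αᵢ^{mᵢ}` with non-generating support. -/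
def NGspace {r n : ℕ} (α : Fin n → Fin r → ℝ) : Submodule ℝ (Frac r) :=
  Submodule.span ℝ {x | ∃ P m, ¬ Generating α {i | 0 < m i} ∧ x = fracOf α P m}

/-- `Φ_σ = 1 / ∏_{j ∈ σ} αⱼ`. -/
def Phi {r n : ℕ} (α : Fin n → Fin r → ℝ) (σ : Finset (Fin n)) : Frac r :=
  (∏ j ∈ σ, emb (linPoly (α j)))⁻¹

/-- `(αⱼ)_{j ∈ σ}` is a basis of `ℝʳ`. -/
def IsConeBasis {r n : ℕ} (α : Fin n → Fin r → ℝ) (σ : Finset (Fin n)) : Prop :=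
  LinearIndependent ℝ (fun j : {x // x ∈ σ} => α j.1) ∧
    Submodule.span ℝ (α '' ↑σ) = ⊤

/-- The Gram determinant `det[⟨αⱼ, α_k⟩]_{j,k ∈ σ}`. -/
def gram {r n : ℕ} (α : Fin n → Fin r → ℝ) (σ : Finset (Fin n)) : ℝ :=
  Matrix.det (Matrix.of fun j k : {x // x ∈ σ} => dotp (α j.1) (α k.1))

/-- A Jeffrey–Kirwan functional for `(𝔄, ε)`. -/
def IsJKFunctional {r n : ℕ} (α : Fin n → Fin r → ℝ) (ε : Fin r → ℝ)
    (lam : Frac r →ₗ[ℝ] ℝ) : Prop :=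
  (∀ x ∈ NGspace α, lam x = 0) ∧
  (∀ m : Fin n → ℕ, Generating α {i | 0 < m i} → (∑ i, m i) ≠ r →
    lam (fracOf α 1 m) = 0) ∧
  (∀ σ : Finset (Fin n), IsConeBasis α σ →
    (InCone α σ ε → lam (Phi α σ) = 1 / Real.sqrt (gram α σ)) ∧
    (¬ InCone α σ ε → lam (Phi α σ) = 0))

/-- The ideal `I_{𝔄,ε}` generated by the products `∏_{j∈J} αⱼ` over all `J` such that
`ε ∉ Cone(αᵢ : i ∉ J)`. -/
def JKIdeal {r n : ℕ} (α : Fin n → Fin r → ℝ) (ε : Fin r → ℝ) :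
    Ideal (MvPolynomial (Fin r) ℝ) :=
  Ideal.span {g | ∃ J : Finset (Fin n), ¬ InCone α Jᶜ ε ∧ g = ∏ j ∈ J, linPoly (α j)}

/-- `H` is a hyperplane of `ℝʳ` spanned by a subset of the list `α`. -/
def IsHyperplaneOf {r n : ℕ} (α : Fin n → Fin r → ℝ) (H : Submodule ℝ (Fin r → ℝ)) : Prop :=
  (∃ s : Set (Fin n), H = Submodule.span ℝ (α '' s)) ∧ Module.finrank ℝ H = r - 1

/-- `Cone(𝔄)` minus the union of the hyperplanes spanned by subsets of `𝔄`. -/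
def chamberComplement {r n : ℕ} (α : Fin n → Fin r → ℝ) : Set (Fin r → ℝ) :=
  coneSet α Finset.univ \ ⋃ H ∈ {H | IsHyperplaneOf α H}, (H : Set (Fin r → ℝ))

/-- A chamber of `𝔄`: a connected component of `Cone(𝔄) ∖ ⋃_{H ∈ ℋ(𝔄)} H`. -/
def IsChamber {r n : ℕ} (α : Fin n → Fin r → ℝ) (c : Set (Fin r → ℝ)) : Prop :=
  ∃ x ∈ chamberComplement α, c = connectedComponentIn (chamberComplement α) x

/-- A monomial order on exponent vectors in `Fin r →₀ ℕ`: a total order compatible with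
addition which is a well-order. -/
structure MonomialOrd (r : ℕ) where
  lt : (Fin r →₀ ℕ) → (Fin r →₀ ℕ) → Prop
  irrefl : ∀ a, ¬ lt a a
  trans : ∀ a b c, lt a b → lt b c → lt a c
  total : ∀ a b, a ≠ b → lt a b ∨ lt b a
  add_right : ∀ a b c, lt a b → lt (a + c) (b + c)
  wf : WellFounded lt

/-- `m` is the exponent of the leading monomial of `f`. -/
def IsLeadMonomial {r : ℕ} (o : MonomialOrd r) (f : MvPolynomial (Fin r) ℝ)
    (m : Fin r →₀ ℕ) : Prop :=
  m ∈ f.support ∧ ∀ m' ∈ f.support, m' ≠ m → o.lt m' m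

/-- `Lt(I)`: the ideal generated by the leading monomials of all nonzero elements of `I`. -/
def ltIdeal {r : ℕ} (o : MonomialOrd r) (I : Ideal (MvPolynomial (Fin r) ℝ)) :
    Ideal (MvPolynomial (Fin r) ℝ) :=
  Ideal.span {g | ∃ f ∈ I, f ≠ 0 ∧ ∃ m, IsLeadMonomial o f m ∧ g = monomial m (1 : ℝ)}

/-- `N` is a normal form of `f` with respect to `I`. -/
def IsNormalForm {r : ℕ} (o : MonomialOrd r) (I : Ideal (MvPolynomial (Fin r) ℝ))
    (f N : MvPolynomial (Fin r) ℝ) : Prop :=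
  f - N ∈ I ∧ ∀ m ∈ N.support, monomial m (1 : ℝ) ∉ ltIdeal o I

section Aux
open MvPolynomial
variable {r n : ℕ}

lemma dotp_self_eq_zero {v : Fin r → ℝ} (h : dotp v v = 0) : v = 0 := by
  funext k
  have h0 : ∀ i ∈ Finset.univ, (0:ℝ) ≤ v i * v i := fun i _ => mul_self_nonneg _
  have := (Finset.sum_eq_zero_iff_of_nonneg h0).mp h k (Finset.mem_univ k)
  simpa [mul_self_eq_zero] using this

lemma linPoly_eval (v w : Fin r → ℝ) : eval w (linPoly v) = dotp v w := by
  simp [linPoly, dotp]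

lemma linPoly_ne_zero {v : Fin r → ℝ} (hv : v ≠ 0) : linPoly v ≠ 0 := by
  intro h
  apply hv
  apply dotp_self_eq_zero
  rw [← linPoly_eval v v, h, map_zero]

/-- `linPoly` as a linear map. -/
def linPolyL : (Fin r → ℝ) →ₗ[ℝ] MvPolynomial (Fin r) ℝ where
  toFun := linPoly
  map_add' v w := by simp [linPoly, add_mul, Finset.sum_add_distrib]
  map_smul' c v := by
    simp [linPoly, smul_eq_C_mul, Finset.mul_sum, mul_assoc]

lemma linPoly_finsum {ι : Type*} (s : Finset ι) (c : ι → ℝ) (f : ι → Fin r → ℝ) :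
    linPoly (∑ i ∈ s, c i • f i) = ∑ i ∈ s, C (c i) * linPoly (f i) := by
  have : linPoly (∑ i ∈ s, c i • f i) = linPolyL (∑ i ∈ s, c i • f i) := rfl
  rw [this, map_sum]
  refine Finset.sum_congr rfl fun i _ => ?_
  rw [map_smul]
  simp [linPolyL, smul_eq_C_mul]
  left; rfl

lemma emb_injective : Function.Injective (emb (r := r)) :=
  IsFractionRing.injective _ _

lemma emb_eq_zero_iff {p : MvPolynomial (Fin r) ℝ} : emb p = 0 ↔ p = 0 :=
  map_eq_zero_iff _ emb_injective

lemma emb_mul (p q : MvPolynomial (Fin r) ℝ) : emb (p * q) = emb p * emb q := map_mul _ _ _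
lemma emb_add (p q : MvPolynomial (Fin r) ℝ) : emb (p + q) = emb p + emb q := map_add _ _ _

lemma emb_smul (c : ℝ) (p : MvPolynomial (Fin r) ℝ) : emb (c • p) = c • emb p := by
  rw [smul_eq_C_mul, emb_mul, Algebra.smul_def, IsScalarTower.algebraMap_apply ℝ (MvPolynomial (Fin r) ℝ) (Frac r)]
  rfl

/-- Existence of a maximum for a `MonomialOrd` on a nonempty finset. -/
lemma MonomialOrd.exists_max (o : MonomialOrd r) (s : Finset (Fin r →₀ ℕ)) (hs : s.Nonempty) :
    ∃ m ∈ s, ∀ m' ∈ s, m' ≠ m → o.lt m' m := by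
  classical
  induction s using Finset.induction_on with
  | empty => exact absurd hs (by simp)
  | @insert a t ha ih =>
    rcases t.eq_empty_or_nonempty with rfl | ht
    · exact ⟨a, by simp, by simp⟩
    · obtain ⟨m, hm, hmax⟩ := ih ht
      rcases eq_or_ne a m with rfl | ham
      · refine ⟨a, Finset.mem_insert_self _ _, ?_⟩
        intro m' hm' hne
        rcases Finset.mem_insert.mp hm' with rfl | hm't
        · exact absurd rfl hne
        · exact hmax m' hm't hne
      rcases o.total a m ham with hlt | hlt
      · refine ⟨m, Finset.mem_insert_of_mem hm, ?_⟩
        intro m' hm' hne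
        rcases Finset.mem_insert.mp hm' with rfl | hm't
        · exact hlt
        · exact hmax m' hm't hne
      · refine ⟨a, Finset.mem_insert_self _ _, ?_⟩
        intro m' hm' hne
        rcases Finset.mem_insert.mp hm' with rfl | hm't
        · exact absurd rfl hne
        · rcases eq_or_ne m' m with rfl | hm'm
          · exact hlt
          · exact o.trans _ _ _ (hmax m' hm't hm'm) hlt

lemma exists_lead_monomial (o : MonomialOrd r) {f : MvPolynomial (Fin r) ℝ} (hf : f ≠ 0) :
    ∃ m, IsLeadMonomial o f m := by
  obtain ⟨m, hm, hmax⟩ := o.exists_max f.support (by simpa [MvPolynomial.support_eq_empty] using hf)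
  exact ⟨m, hm, hmax⟩

/-- An element of `I` all of whose monomials avoid `Lt(I)` is zero. -/
lemma eq_zero_of_support_avoid (o : MonomialOrd r) (I : Ideal (MvPolynomial (Fin r) ℝ))
    {f : MvPolynomial (Fin r) ℝ} (hf : f ∈ I)
    (h : ∀ m ∈ f.support, monomial m (1 : ℝ) ∉ ltIdeal o I) : f = 0 := by
  by_contra hne
  obtain ⟨m, hlead⟩ := exists_lead_monomial o hne
  exact h m hlead.1 (Ideal.subset_span ⟨f, hf, hne, m, hlead, rfl⟩)

end Aux
section Aux2
open MvPolynomial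
variable {r n : ℕ} {α : Fin n → Fin r → ℝ} {ε : Fin r → ℝ}

lemma InCone.mono {s t : Finset (Fin n)} (hst : s ⊆ t) {v} (h : InCone α s v) :
    InCone α t v := by
  obtain ⟨c, hc, hv⟩ := h
  refine ⟨fun i => if i ∈ s then c i else 0, fun i _ => ?_, ?_⟩
  · by_cases h : i ∈ s
    · simpa [h] using hc i h
    · simp [h]
  · rw [hv, ← Finset.sum_subset hst (fun x _ hxs => by simp [hxs])]
    exact Finset.sum_congr rfl fun i hi => by simp [hi]

lemma mem_span_of_inCone {s : Finset (Fin n)} (h : InCone α s ε) :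
    ε ∈ Submodule.span ℝ (α '' ↑s) := by
  obtain ⟨c, _, hv⟩ := h
  rw [hv]
  exact Submodule.sum_mem _ fun i hi => Submodule.smul_mem _ _
    (Submodule.subset_span ⟨i, hi, rfl⟩)

lemma span_ne_top_of_card_lt {s : Finset (Fin n)} (hs : s.card < r) :
    Submodule.span ℝ (α '' ↑s) ≠ ⊤ := by
  intro h
  have h1 := finrank_span_finset_le_card (R := ℝ) (s.image α)
  rw [Set.finrank, show ((s.image α : Finset (Fin r → ℝ)) : Set (Fin r → ℝ)) = α '' ↑s by simp,
    h] at h1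
  have h2 : (s.image α).card ≤ s.card := Finset.card_image_le
  have h3 : Module.finrank ℝ (⊤ : Submodule ℝ (Fin r → ℝ)) = r := by
    simp [finrank_top]
  omega

lemma generating_of_inCone (hreg : RegularWrt α ε) {s : Finset (Fin n)}
    (h : InCone α s ε) : Submodule.span ℝ (α '' ↑s) = ⊤ := by
  by_contra hne
  exact hreg ↑s hne (mem_span_of_inCone h)

lemma indep_of_span_card {σ : Finset (Fin n)} (hcard : σ.card = r)
    (hspan : Submodule.span ℝ (α '' ↑σ) = ⊤) :
    LinearIndependent ℝ (fun j : {x // x ∈ σ} => α j.1) := by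
  apply linearIndependent_of_top_le_span_of_card_eq_finrank
  · rw [show Set.range (fun j : {x // x ∈ σ} => α j.1) = α '' ↑σ by
      ext v; simp [Set.mem_image]]
    rw [hspan]
  · simp [hcard]

lemma coeff_unique {σ : Finset (Fin n)}
    (hind : LinearIndependent ℝ (fun j : {x // x ∈ σ} => α j.1)) {c d : Fin n → ℝ}
    (h : ∑ i ∈ σ, c i • α i = ∑ i ∈ σ, d i • α i) : ∀ i ∈ σ, c i = d i := by
  have h1 : ∑ i ∈ σ, (c i - d i) • α i = 0 := by
    simp only [sub_smul, Finset.sum_sub_distrib, h, sub_self]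
  have h2 : ∑ j : {x // x ∈ σ}, (c j.1 - d j.1) • α j.1 = 0 := by
    rw [← h1, ← Finset.sum_attach σ (fun i => (c i - d i) • α i)]
    rfl
  have h3 := Fintype.linearIndependent_iff.mp hind (fun j => c j.1 - d j.1) h2
  intro i hi
  have := h3 ⟨i, hi⟩
  simp only [] at this
  linarith

lemma emb_prod {ι : Type*} (K : Finset ι) (f : ι → MvPolynomial (Fin r) ℝ) :
    emb (∏ j ∈ K, f j) = ∏ j ∈ K, emb (f j) := by
  unfold emb; exact map_prod _ _ _

lemma embA_ne_zero (hα : ∀ i, α i ≠ 0) (i : Fin n) : emb (linPoly (α i)) ≠ 0 :=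
  fun h => linPoly_ne_zero (hα i) (emb_eq_zero_iff.mp h)

lemma prodA_ne_zero (hα : ∀ i, α i ≠ 0) (S : Finset (Fin n)) :
    (∏ i ∈ S, emb (linPoly (α i))) ≠ 0 :=
  Finset.prod_ne_zero_iff.mpr fun i _ => embA_ne_zero hα i

lemma frac_cancel (hα : ∀ i, α i ≠ 0) (K : Finset (Fin n)) (p : MvPolynomial (Fin r) ℝ) :
    emb (p * ∏ j ∈ K, linPoly (α j)) / ∏ i, emb (linPoly (α i)) =
      emb p / ∏ i ∈ Kᶜ, emb (linPoly (α i)) := by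
  rw [emb_mul, emb_prod, ← Finset.prod_mul_prod_compl K (fun i => emb (linPoly (α i))),
    mul_comm (emb p), mul_div_mul_left _ _ (prodA_ne_zero hα K)]

lemma frac_erase (hα : ∀ i, α i ≠ 0) {S : Finset (Fin n)} {i : Fin n} (hi : i ∈ S)
    (Z : Frac r) :
    (emb (linPoly (α i)) * Z) / ∏ j ∈ S, emb (linPoly (α j)) =
      Z / ∏ j ∈ S.erase i, emb (linPoly (α j)) := by
  rw [← Finset.mul_prod_erase S _ hi, mul_div_mul_left _ _ (embA_ne_zero hα i)]

lemma fracOf_indicator (S : Finset (Fin n)) (P : MvPolynomial (Fin r) ℝ) :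
    fracOf α P (fun i => if i ∈ S then 1 else 0) =
      emb P / ∏ i ∈ S, emb (linPoly (α i)) := by
  unfold fracOf
  congr 1
  rw [show (∏ i, emb (linPoly (α i)) ^ (fun i => if i ∈ S then 1 else 0) i) =
      ∏ i, (if i ∈ S then emb (linPoly (α i)) else 1) from
    Finset.prod_congr rfl (fun i _ => by by_cases h : i ∈ S <;> simp [h]),
    Finset.prod_ite_mem, Finset.univ_inter]

lemma indicator_support (S : Finset (Fin n)) :
    {i | 0 < (fun i => if i ∈ S then 1 else 0) i} = (S : Set (Fin n)) := by
  ext i; by_cases h : i ∈ S <;> simp [h]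

end Aux2
section Aux3
open MvPolynomial
variable {r n : ℕ} {α : Fin n → Fin r → ℝ} {ε : Fin r → ℝ}

lemma exists_rep_of_span {S : Finset (Fin n)} (hspan : Submodule.span ℝ (α '' ↑S) = ⊤)
    (v : Fin r → ℝ) : ∃ b : Fin n → ℝ, v = ∑ i ∈ S, b i • α i := by
  have hv : v ∈ Submodule.span ℝ (α '' ↑S) := hspan ▸ Submodule.mem_top
  rw [Finsupp.mem_span_image_iff_linearCombination] at hv
  obtain ⟨l, hl, hlv⟩ := hv
  have hsub : l.support ⊆ S := Finset.coe_subset.mp (Finsupp.mem_supported ℝ l |>.mp hl)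
  refine ⟨l, ?_⟩
  rw [← hlv, Finsupp.linearCombination_apply, Finsupp.sum]
  refine Finset.sum_subset hsub fun x _ hnx => ?_
  rw [Finsupp.notMem_support_iff.mp hnx, zero_smul]

lemma lam_NG {lam : Frac r →ₗ[ℝ] ℝ} (hlam : IsJKFunctional α ε lam) {S : Finset (Fin n)}
    (hS : ¬ Generating α (S : Set (Fin n))) (P : MvPolynomial (Fin r) ℝ) :
    lam (emb P / ∏ i ∈ S, emb (linPoly (α i))) = 0 := by
  apply hlam.1
  apply Submodule.subset_span
  refine ⟨P, fun i => if i ∈ S then 1 else 0, ?_, (fracOf_indicator S P).symm⟩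
  rw [indicator_support]
  exact hS

lemma emb_sum {ι : Type*} (s : Finset ι) (f : ι → MvPolynomial (Fin r) ℝ) :
    emb (∑ i ∈ s, f i) = ∑ i ∈ s, emb (f i) := by
  unfold emb; exact map_sum _ _ _

lemma linPoly_single (k : Fin r) : linPoly (Pi.single k (1:ℝ)) = X k := by
  unfold linPoly
  rw [Finset.sum_eq_single k]
  · simp
  · intro b _ hb
    simp [Pi.single_eq_of_ne hb]
  · simp

lemma lam_vanish_mon (hα : ∀ i, α i ≠ 0)
    {lam : Frac r →ₗ[ℝ] ℝ} (hlam : IsJKFunctional α ε lam) :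
    ∀ d : ℕ, ∀ S : Finset (Fin n), ¬ InCone α S ε →
      ∀ a : Fin r →₀ ℕ, (a.sum fun _ e => e) ≤ d → ∀ c0 : ℝ,
        lam (emb (monomial a c0) / ∏ i ∈ S, emb (linPoly (α i))) = 0 := by
  intro d
  induction d with
  | zero =>
    intro S hS a ha c0
    have ha0 : a = 0 := by
      by_contra hne
      obtain ⟨k, hk⟩ := Finsupp.support_nonempty_iff.mpr hne
      have hpos : 0 < a.sum fun _ e => e := by
        refine Finset.sum_pos' (fun i _ => Nat.zero_le _) ⟨k, hk, ?_⟩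
        exact Nat.pos_of_ne_zero (Finsupp.mem_support_iff.mp hk)
      omega
    subst ha0
    by_cases hgen : Generating α (S : Set (Fin n))
    · -- constant numerator, generating denominator
      have key : emb (monomial (0 : Fin r →₀ ℕ) c0) / ∏ i ∈ S, emb (linPoly (α i)) =
          c0 • fracOf α 1 (fun i => if i ∈ S then 1 else 0) := by
        rw [fracOf_indicator]
        rw [show (monomial (0 : Fin r →₀ ℕ) c0 : MvPolynomial (Fin r) ℝ) = c0 • 1 by
          simp [smul_eq_C_mul]]
        rw [emb_smul, smul_div_assoc]
      rw [key, map_smul]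
      by_cases hcard : S.card = r
      · -- S is a basis with ε not in its cone
        have hbasis : IsConeBasis α S := ⟨indep_of_span_card hcard hgen, hgen⟩
        have h0 : lam (Phi α S) = 0 := (hlam.2.2 S hbasis).2 hS
        have : fracOf α 1 (fun i => if i ∈ S then 1 else 0) = Phi α S := by
          rw [fracOf_indicator, Phi, show emb (1 : MvPolynomial (Fin r) ℝ) = 1 from map_one _,
            one_div]
        rw [this, h0, smul_zero]
      · have hsum : (∑ i, (fun i => if i ∈ S then 1 else 0) i) ≠ r := by
          simpa using hcard
        have := hlam.2.1 _ (by rwa [indicator_support]) hsum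
        rw [this, smul_zero]
    · rw [show emb (monomial (0 : Fin r →₀ ℕ) c0) / ∏ i ∈ S, emb (linPoly (α i)) =
        emb (monomial 0 c0) / ∏ i ∈ S, emb (linPoly (α i)) from rfl]
      exact lam_NG hlam hgen _
  | succ d ih =>
    intro S hS a ha c0
    by_cases hgen : Generating α (S : Set (Fin n))
    · rcases eq_or_ne a 0 with rfl | hane
      · exact ih S hS 0 (by simp) c0
      · obtain ⟨k, hk⟩ := Finsupp.support_nonempty_iff.mpr hane
        have hk1 : 1 ≤ a k := Nat.pos_of_ne_zero (Finsupp.mem_support_iff.mp hk)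
        set a' := a - Finsupp.single k 1 with ha'
        have haa : a' + Finsupp.single k 1 = a := by
          rw [ha']
          exact tsub_add_cancel_of_le (Finsupp.single_le_iff.mpr hk1)
        have hsum' : (a'.sum fun _ e => e) ≤ d := by
          have h1 : ((a' + Finsupp.single k 1).sum fun _ e => e) =
              (a'.sum fun _ e => e) + 1 := by
            rw [Finsupp.sum_add_index (by intros; rfl) (by intros; rfl)]
            simp
          rw [haa] at h1
          omega
        have hmon : (monomial a c0 : MvPolynomial (Fin r) ℝ) =
            monomial a' c0 * X k := by
          rw [← haa, monomial_add_single, pow_one]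
        obtain ⟨b, hb⟩ := exists_rep_of_span (α := α) hgen (Pi.single k (1:ℝ))
        have hXk : (X k : MvPolynomial (Fin r) ℝ) =
            ∑ i ∈ S, C (b i) * linPoly (α i) := by
          rw [← linPoly_single k, hb, linPoly_finsum]
        have expand : emb (monomial a c0) / ∏ i ∈ S, emb (linPoly (α i)) =
            ∑ i ∈ S, b i • (emb (monomial a' c0) / ∏ j ∈ S.erase i, emb (linPoly (α j))) := by
          rw [hmon, emb_mul, hXk]
          rw [show emb (∑ i ∈ S, C (b i) * linPoly (α i)) =
              ∑ i ∈ S, b i • emb (linPoly (α i)) from by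
            rw [emb_sum]
            refine Finset.sum_congr rfl fun i _ => ?_
            rw [← smul_eq_C_mul, emb_smul]]
          rw [Finset.mul_sum, Finset.sum_div]
          refine Finset.sum_congr rfl fun i hi => ?_
          rw [mul_comm (emb (monomial a' c0)) (b i • emb (linPoly (α i))),
            smul_mul_assoc, smul_div_assoc, frac_erase hα hi]
        rw [expand, map_sum]
        refine Finset.sum_eq_zero fun i hi => ?_
        rw [map_smul]
        have hS' : ¬ InCone α (S.erase i) ε := fun h => hS (h.mono (Finset.erase_subset _ _))
        rw [ih (S.erase i) hS' a' hsum' c0, smul_zero]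
    · exact lam_NG hlam hgen _

lemma lam_vanish (hα : ∀ i, α i ≠ 0)
    {lam : Frac r →ₗ[ℝ] ℝ} (hlam : IsJKFunctional α ε lam) {S : Finset (Fin n)}
    (hS : ¬ InCone α S ε) (h : MvPolynomial (Fin r) ℝ) :
    lam (emb h / ∏ i ∈ S, emb (linPoly (α i))) = 0 := by
  conv_lhs => rw [h.as_sum]
  rw [emb_sum, Finset.sum_div, map_sum]
  exact Finset.sum_eq_zero fun v _ =>
    lam_vanish_mon hα hlam (v.sum fun _ e => e) S hS v le_rfl _

end Aux3
section Aux4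
open MvPolynomial
variable {r n : ℕ} {α : Fin n → Fin r → ℝ} {ε : Fin r → ℝ}

lemma lam_vanish_ideal (hα : ∀ i, α i ≠ 0)
    {lam : Frac r →ₗ[ℝ] ℝ} (hlam : IsJKFunctional α ε lam) {Q : MvPolynomial (Fin r) ℝ}
    (hQ : Q ∈ JKIdeal α ε) :
    lam (emb Q / ∏ i, emb (linPoly (α i))) = 0 := by
  suffices h : ∀ p, lam (emb (p * Q) / ∏ i, emb (linPoly (α i))) = 0 by
    have := h 1
    rwa [one_mul] at this
  unfold JKIdeal at hQ
  induction hQ using Submodule.span_induction with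
  | mem x hx =>
    obtain ⟨K, hK, rfl⟩ := hx
    intro p
    rw [frac_cancel hα K p]
    exact lam_vanish hα hlam hK p
  | zero =>
    intro p
    rw [mul_zero, show emb (0 : MvPolynomial (Fin r) ℝ) = 0 from map_zero _, zero_div,
      map_zero]
  | add x y _ _ ihx ihy =>
    intro p
    rw [mul_add, emb_add, add_div, map_add, ihx p, ihy p, add_zero]
  | smul a x _ ih =>
    intro p
    rw [smul_eq_mul, show p * (a * x) = (p * a) * x from by ring]
    exact ih (p * a)

lemma lam_delta (hα : ∀ i, α i ≠ 0)
    {lam : Frac r →ₗ[ℝ] ℝ} (hlam : IsJKFunctional α ε lam) {J : Finset (Fin n)}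
    (hJ : IsConeBasis α J) (hεJ : InCone α J ε) :
    lam (emb (∏ i ∈ Jᶜ, linPoly (α i)) / ∏ i, emb (linPoly (α i))) =
      1 / Real.sqrt (gram α J) := by
  have h1 : emb (∏ i ∈ Jᶜ, linPoly (α i)) / ∏ i, emb (linPoly (α i)) = Phi α J := by
    rw [show (∏ i ∈ Jᶜ, linPoly (α i)) = 1 * ∏ i ∈ Jᶜ, linPoly (α i) from (one_mul _).symm,
      frac_cancel hα Jᶜ 1, compl_compl, show emb (1 : MvPolynomial (Fin r) ℝ) = 1 from
      map_one _, one_div, Phi]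
  rw [h1]
  exact (hlam.2.2 J hJ).1 hεJ

open Matrix in
lemma gram_pos {J : Finset (Fin n)} (hcard : J.card = r)
    (hind : LinearIndependent ℝ (fun j : {x // x ∈ J} => α j.1)) :
    0 < gram α J := by
  classical
  have hc : Fintype.card {x // x ∈ J} = r := by simp [hcard]
  let e : {x // x ∈ J} ≃ Fin r := Fintype.equivFinOfCardEq hc
  let M : Matrix (Fin r) (Fin r) ℝ := Matrix.of fun p q => α (e.symm p).1 q
  have hrows : LinearIndependent ℝ (fun p : Fin r => M p) := by
    have : (fun p : Fin r => M p) = (fun j : {x // x ∈ J} => α j.1) ∘ e.symm := rfl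
    rw [this]
    exact hind.comp e.symm e.symm.injective
  have hdet : M.det ≠ 0 := by
    have := Matrix.linearIndependent_rows_iff_isUnit.mp hrows
    exact (Matrix.isUnit_iff_isUnit_det M).mp this |>.ne_zero
  have hgram : gram α J = (M * Mᵀ).det := by
    rw [show M * Mᵀ = ((Matrix.of fun j k : {x // x ∈ J} => dotp (α j.1) (α k.1)).submatrix
        e.symm e.symm) from ?_, Matrix.det_submatrix_equiv_self e.symm]
    · rfl
    · ext p q
      simp [M, Matrix.mul_apply, dotp, Matrix.submatrix]
  rw [hgram, Matrix.det_mul, Matrix.det_transpose]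
  exact mul_self_pos.mpr hdet

end Aux4
section Aux5
open MvPolynomial
variable {r n : ℕ}

/-- A basis of `ℝʳ` from the list whose cone contains `ε`. -/
def GoodB (α : Fin n → Fin r → ℝ) (ε : Fin r → ℝ) (σ : Finset (Fin n)) : Prop :=
  σ.card = r ∧ Submodule.span ℝ (α '' ↑σ) = ⊤ ∧ InCone α σ ε

open Classical in
/-- The LP cost of the basic solution of `σ` (costs: `0` on `J`, `1` off `J`). -/
noncomputable def zval (α : Fin n → Fin r → ℝ) (ε : Fin r → ℝ) (J σ : Finset (Fin n)) : ℝ :=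
  if h : InCone α σ ε then
    ∑ i ∈ σ, (if i ∈ J then (0:ℝ) else 1) * Classical.choose h i
  else 0

variable {α : Fin n → Fin r → ℝ} {ε : Fin r → ℝ}

lemma dotp_finsum {ι : Type*} (s : Finset ι) (c : ι → ℝ) (f : ι → Fin r → ℝ)
    (ξ : Fin r → ℝ) : dotp (∑ i ∈ s, c i • f i) ξ = ∑ i ∈ s, c i * dotp (f i) ξ := by
  unfold dotp
  simp only [Finset.sum_apply, Pi.smul_apply, smul_eq_mul, Finset.sum_mul]
  rw [Finset.sum_comm]
  refine Finset.sum_congr rfl fun i _ => ?_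
  rw [Finset.mul_sum]
  exact Finset.sum_congr rfl fun k _ => by ring

lemma rep_ne_zero (hreg : RegularWrt α ε) {σ : Finset (Fin n)} (hσcard : σ.card = r)
    {c : Fin n → ℝ} (hc : ε = ∑ i ∈ σ, c i • α i) {a : Fin n} (ha : a ∈ σ) :
    c a ≠ 0 := by
  intro h0
  have h1 : ε = ∑ i ∈ σ.erase a, c i • α i := by
    rw [hc, ← Finset.add_sum_erase σ _ ha, h0, zero_smul, zero_add]
  have h2 : ε ∈ Submodule.span ℝ (α '' ↑(σ.erase a)) := by
    rw [h1]
    exact Submodule.sum_mem _ fun i hi => Submodule.smul_mem _ _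
      (Submodule.subset_span ⟨i, hi, rfl⟩)
  have h3 : (σ.erase a).card < r := by
    rw [Finset.card_erase_of_mem ha, hσcard]
    have : 1 ≤ r := by
      rcases Nat.eq_zero_or_pos r with rfl | h
      · exact absurd (Finset.card_eq_zero.mp hσcard ▸ ha) (Finset.notMem_empty a)
      · exact h
    omega
  exact hreg ↑(σ.erase a) (span_ne_top_of_card_lt h3) h2

lemma zval_eq {J σ : Finset (Fin n)} (hσ : GoodB α ε σ) {c : Fin n → ℝ}
    (hc : ε = ∑ i ∈ σ, c i • α i) :
    zval α ε J σ = ∑ i ∈ σ, (if i ∈ J then (0:ℝ) else 1) * c i := by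
  obtain ⟨hcard, hspan, hcone⟩ := hσ
  rw [zval, dif_pos hcone]
  have hspec := Classical.choose_spec hcone
  have hind := indep_of_span_card hcard hspan
  have := coeff_unique hind (hspec.2.symm.trans hc)
  exact Finset.sum_congr rfl fun i hi => by rw [this i hi]

/-- Existence of an entering index with negative reduced cost, if `σ ≠ J`. -/
lemma exists_entering (hreg : RegularWrt α ε) {J σ : Finset (Fin n)}
    (hJ : IsConeBasis α J) (hεJ : InCone α J ε) (hJcard : J.card = r)
    (hσ : GoodB α ε σ) (hne : σ ≠ J) {u : Fin n → ℝ}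
    (hu : ε = ∑ i ∈ σ, u i • α i) :
    ∃ b, b ∉ σ ∧ ∃ w : Fin n → ℝ, α b = ∑ j ∈ σ, w j • α j ∧
      (if b ∈ J then (0:ℝ) else 1) < ∑ j ∈ σ, (if j ∈ J then (0:ℝ) else 1) * w j := by
  classical
  by_contra hcon
  push_neg at hcon
  set cost : Fin n → ℝ := fun i => if i ∈ J then (0:ℝ) else 1 with hcost
  -- For every b, pick a representation of `α b` in the basis σ.
  have hrepall : ∀ b, ∃ w : Fin n → ℝ, α b = ∑ j ∈ σ, w j • α j :=
    fun b => exists_rep_of_span hσ.2.1 (α b)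
  choose w hw using hrepall
  have hind := indep_of_span_card hσ.1 hσ.2.1
  -- reduced costs are nonnegative for all b (trivially for b ∈ σ, by hcon otherwise)
  have hrc : ∀ b, cost b ≥ ∑ j ∈ σ, cost j * w b j := by
    intro b
    by_cases hbσ : b ∈ σ
    · -- w b agrees with the delta function on σ
      have hδ : α b = ∑ j ∈ σ, (fun j => if j = b then (1:ℝ) else 0) j • α j := by
        rw [Finset.sum_eq_single b]
        · simp
        · intro j _ hj; simp [hj]
        · intro h; exact absurd hbσ h
      have := coeff_unique hind ((hw b).symm.trans hδ)
      have heq : ∑ j ∈ σ, cost j * w b j = cost b := by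
        rw [Finset.sum_eq_single b]
        · rw [this b hbσ]; simp
        · intro j hj hjb; rw [this j hj]; simp [hjb]
        · intro h; exact absurd hbσ h
      rw [heq]
    · exact hcon b hbσ (w b) (hw b)
  -- representation of ε in J
  obtain ⟨v, hv0, hvε⟩ := hεJ
  -- uniqueness: u j = ∑_{b ∈ J} v b * w b j on σ
  have hkey : ∀ j ∈ σ, u j = ∑ b ∈ J, v b * w b j := by
    have hrep2 : ε = ∑ j ∈ σ, (∑ b ∈ J, v b * w b j) • α j := by
      rw [hvε]
      rw [show ∑ b ∈ J, v b • α b = ∑ b ∈ J, ∑ j ∈ σ, (v b * w b j) • α j from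
        Finset.sum_congr rfl fun b _ => by
          rw [hw b, Finset.smul_sum]
          exact Finset.sum_congr rfl fun j _ => smul_smul _ _ _]
      rw [Finset.sum_comm]
      exact Finset.sum_congr rfl fun j _ => (Finset.sum_smul).symm
    exact coeff_unique hind (hu.symm.trans hrep2)
  -- z(σ) ≤ 0
  have hz1a : ∀ j ∈ σ, cost j * u j = ∑ b ∈ J, v b * (cost j * w b j) := by
    intro j hj
    rw [hkey j hj, Finset.mul_sum]
    exact Finset.sum_congr rfl fun b _ => by ring
  have hz1 : ∑ j ∈ σ, cost j * u j = ∑ b ∈ J, v b * (∑ j ∈ σ, cost j * w b j) := by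
    rw [Finset.sum_congr rfl hz1a, Finset.sum_comm]
    exact Finset.sum_congr rfl fun b _ => (Finset.mul_sum _ _ _).symm
  have hz2 : ∑ b ∈ J, v b * (∑ j ∈ σ, cost j * w b j) ≤ ∑ b ∈ J, v b * cost b :=
    Finset.sum_le_sum fun b hb => mul_le_mul_of_nonneg_left (hrc b) (hv0 b hb)
  have hz3 : ∑ b ∈ J, v b * cost b = 0 :=
    Finset.sum_eq_zero fun b hb => by simp [hcost, hb]
  -- but z(σ) > 0 since σ ≠ J
  obtain ⟨j0, hj0σ, hj0J⟩ : ∃ j ∈ σ, j ∉ J := by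
    by_contra hj
    push_neg at hj
    exact hne (Finset.eq_of_subset_of_card_le hj (by rw [hσ.1, hJcard]))
  have hupos : ∀ i ∈ σ, 0 < u i := by
    intro i hi
    obtain ⟨c, hc0, hcε⟩ := hσ.2.2
    have heq : u i = c i := coeff_unique hind (hu.symm.trans hcε) i hi
    have hne0 : u i ≠ 0 := rep_ne_zero hreg hσ.1 hu hi
    have h0 : (0:ℝ) ≤ u i := heq ▸ hc0 i hi
    exact lt_of_le_of_ne h0 (Ne.symm hne0)
  have hzpos : 0 < ∑ j ∈ σ, cost j * u j := by
    refine Finset.sum_pos' (fun i hi => ?_) ⟨j0, hj0σ, ?_⟩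
    · by_cases hiJ : i ∈ J
      · simp [hcost, hiJ]
      · simp only [hcost, if_neg hiJ, one_mul]
        exact le_of_lt (hupos i hi)
    · simp only [hcost, if_neg hj0J, one_mul]
      exact hupos j0 hj0σ
  linarith [hz1, hz2, hz3, hzpos]

end Aux5
section Aux6
open MvPolynomial
variable {r n : ℕ} {α : Fin n → Fin r → ℝ} {ε : Fin r → ℝ}

lemma simplex_step (hα : ∀ i, α i ≠ 0) (hpol : Polarized α) (hreg : RegularWrt α ε)
    {J σ : Finset (Fin n)} (hJ : IsConeBasis α J) (hεJ : InCone α J ε)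
    (hJcard : J.card = r) (hσ : GoodB α ε σ) (hne : σ ≠ J) :
    ∃ σ' : Finset (Fin n), GoodB α ε σ' ∧ zval α ε J σ' < zval α ε J σ ∧
      ∃ t : ℝ, 0 < t ∧
        (∏ i ∈ σᶜ, linPoly (α i)) - t • (∏ i ∈ σ'ᶜ, linPoly (α i)) ∈ JKIdeal α ε := by
  classical
  have hind := indep_of_span_card hσ.1 hσ.2.1
  obtain ⟨u, hu0, huε⟩ := hσ.2.2
  have hupos : ∀ i ∈ σ, 0 < u i := fun i hi =>
    lt_of_le_of_ne (hu0 i hi) (Ne.symm (rep_ne_zero hreg hσ.1 huε hi))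
  obtain ⟨b, hbσ, w, hwb, hrc⟩ := exists_entering hreg hJ hεJ hJcard hσ hne huε
  set cost : Fin n → ℝ := fun i => if i ∈ J then (0:ℝ) else 1 with hcost
  -- the pivot column has a positive entry
  obtain ⟨ξ, hξ⟩ := hpol
  have hTne : (σ.filter fun j => 0 < w j).Nonempty := by
    rw [Finset.filter_nonempty_iff]
    by_contra hTe
    push_neg at hTe
    have h1 : dotp (α b) ξ = ∑ j ∈ σ, w j * dotp (α j) ξ := by
      rw [hwb, dotp_finsum]
    have h2 : dotp (α b) ξ ≤ 0 := by
      rw [h1]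
      exact Finset.sum_nonpos fun j hj =>
        mul_nonpos_of_nonpos_of_nonneg (hTe j hj) (le_of_lt (hξ j))
    linarith [hξ b]
  obtain ⟨a, haT, hamin⟩ :=
    Finset.exists_min_image (σ.filter fun j => 0 < w j) (fun j => u j / w j) hTne
  have haσ : a ∈ σ := (Finset.mem_filter.mp haT).1
  have hwa : 0 < w a := (Finset.mem_filter.mp haT).2
  have hane : a ≠ b := fun h => hbσ (h ▸ haσ)
  set s : ℝ := u a / w a with hs
  have hspos : 0 < s := div_pos (hupos a haσ) hwa
  have hsa : u a = s * w a := by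
    rw [hs, div_mul_cancel₀ _ (ne_of_gt hwa)]
  -- base identity
  have hbase : ∀ s' : ℝ, ε - s' • α b = ∑ k ∈ σ, (u k - s' * w k) • α k := by
    intro s'
    rw [huε, hwb, Finset.smul_sum, ← Finset.sum_sub_distrib]
    exact Finset.sum_congr rfl fun k _ => by rw [smul_smul, ← sub_smul]
  -- strict minimality of the ratio
  have hstrict : ∀ j ∈ σ, 0 < w j → j ≠ a → s < u j / w j := by
    intro j hjσ hwj hja
    rcases lt_or_ge s (u j / w j) with h | h
    · exact h
    exfalso
    have heq : u j / w j = s :=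
      le_antisymm h (hamin j (Finset.mem_filter.mpr ⟨hjσ, hwj⟩))
    have hsj : u j = s * w j := by
      rw [← heq, div_mul_cancel₀ _ (ne_of_gt hwj)]
    have hsub : ((σ.erase a).erase j) ⊆ σ :=
      subset_trans (Finset.erase_subset _ _) (Finset.erase_subset _ _)
    have hεsum : ε - s • α b = ∑ k ∈ (σ.erase a).erase j, (u k - s * w k) • α k := by
      rw [hbase s]
      refine (Finset.sum_subset hsub fun k hkσ hk => ?_).symm
      have hkaj : k = j ∨ k = a := by
        by_contra hc
        push_neg at hc
        exact hk (Finset.mem_erase.mpr ⟨hc.1, Finset.mem_erase.mpr ⟨hc.2, hkσ⟩⟩)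
      rcases hkaj with rfl | rfl
      · rw [show u k - s * w k = 0 by rw [hsj]; ring, zero_smul]
      · rw [show u k - s * w k = 0 by rw [hsa]; ring, zero_smul]
    set U : Finset (Fin n) := insert b ((σ.erase a).erase j) with hU
    have hεU : ε ∈ Submodule.span ℝ (α '' ↑U) := by
      have hεeq : ε = s • α b + ∑ k ∈ (σ.erase a).erase j, (u k - s * w k) • α k := by
        rw [← hεsum]; ring
      rw [hεeq]
      refine Submodule.add_mem _ (Submodule.smul_mem _ _ (Submodule.subset_span
        ⟨b, Finset.mem_coe.mpr (Finset.mem_insert_self _ _), rfl⟩))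
        (Submodule.sum_mem _ fun k hk => Submodule.smul_mem _ _
        (Submodule.subset_span ⟨k, Finset.mem_coe.mpr (Finset.mem_insert_of_mem hk), rfl⟩))
    have hjea : j ∈ σ.erase a := Finset.mem_erase.mpr ⟨hja, hjσ⟩
    have hr2 : 2 ≤ r := by
      have hsub2 : ({j, a} : Finset (Fin n)) ⊆ σ := by
        intro x hx
        rcases Finset.mem_insert.mp hx with rfl | hx
        · exact hjσ
        · rw [Finset.mem_singleton.mp hx]; exact haσ
      have := Finset.card_le_card hsub2
      rw [Finset.card_insert_of_notMem (by simp [hja]), Finset.card_singleton, hσ.1] at this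
      omega
    have hUcard : U.card < r := by
      have h1 : ((σ.erase a).erase j).card = r - 2 := by
        rw [Finset.card_erase_of_mem hjea, Finset.card_erase_of_mem haσ, hσ.1]
        omega
      have h2 : U.card ≤ r - 2 + 1 := by
        rw [hU]
        calc (insert b ((σ.erase a).erase j)).card ≤ ((σ.erase a).erase j).card + 1 :=
          Finset.card_insert_le _ _
        _ = r - 2 + 1 := by rw [h1]
      omega
    exact hreg ↑U (span_ne_top_of_card_lt hUcard) hεU
  -- the new basis
  have hbea : b ∉ σ.erase a := fun h => hbσ (Finset.mem_of_mem_erase h)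
  set σ' : Finset (Fin n) := insert b (σ.erase a) with hσ'
  have hrpos : 0 < r := hσ.1 ▸ Finset.card_pos.mpr ⟨a, haσ⟩
  have hcard' : σ'.card = r := by
    rw [hσ', Finset.card_insert_of_notMem hbea, Finset.card_erase_of_mem haσ, hσ.1]
    omega
  have hαa : α a = (w a)⁻¹ • (α b - ∑ j ∈ σ.erase a, w j • α j) := by
    have h1 : α b = w a • α a + ∑ j ∈ σ.erase a, w j • α j := by
      rw [hwb, ← Finset.add_sum_erase σ _ haσ]
    rw [h1, add_sub_cancel_right, smul_smul, inv_mul_cancel₀ (ne_of_gt hwa), one_smul]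
  have hspan' : Submodule.span ℝ (α '' ↑σ') = ⊤ := by
    rw [eq_top_iff, ← hσ.2.1]
    rw [Submodule.span_le]
    rintro v ⟨k, hkσ, rfl⟩
    rcases eq_or_ne k a with rfl | hka
    · rw [SetLike.mem_coe, hαa]
      refine Submodule.smul_mem _ _ (Submodule.sub_mem _ (Submodule.subset_span
        ⟨b, Finset.mem_coe.mpr (Finset.mem_insert_self _ _), rfl⟩)
        (Submodule.sum_mem _ fun j hj => Submodule.smul_mem _ _
        (Submodule.subset_span ⟨j, Finset.mem_coe.mpr (Finset.mem_insert_of_mem hj), rfl⟩)))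
    · exact Submodule.subset_span ⟨k, Finset.mem_coe.mpr (Finset.mem_insert_of_mem
        (Finset.mem_erase.mpr ⟨hka, Finset.mem_coe.mp hkσ⟩)), rfl⟩
  set c' : Fin n → ℝ := fun i => if i = b then s else u i - s * w i with hc'
  have hc'ε : ε = ∑ i ∈ σ', c' i • α i := by
    rw [hσ', Finset.sum_insert hbea]
    have h1 : ε - s • α b = ∑ k ∈ σ.erase a, (u k - s * w k) • α k := by
      rw [hbase s]
      refine (Finset.sum_subset (Finset.erase_subset _ _) fun k hkσ hk => ?_).symm
      have : k = a := by
        by_contra hc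
        exact hk (Finset.mem_erase.mpr ⟨hc, hkσ⟩)
      subst this
      rw [show u k - s * w k = 0 by rw [hsa]; ring, zero_smul]
    have h2 : ∑ i ∈ σ.erase a, c' i • α i = ∑ k ∈ σ.erase a, (u k - s * w k) • α k := by
      refine Finset.sum_congr rfl fun i hi => ?_
      have hib : i ≠ b := fun h => hbea (h ▸ hi)
      rw [hc']
      simp [hib]
    rw [h2, ← h1, hc']
    simp
  have hc'0 : ∀ i ∈ σ', 0 ≤ c' i := by
    intro i hi
    rcases Finset.mem_insert.mp hi with rfl | hi
    · rw [hc']; simp [le_of_lt hspos]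
    · have hiσ : i ∈ σ := Finset.mem_of_mem_erase hi
      have hib : i ≠ b := fun h => hbea (h ▸ hi)
      rw [hc']
      simp only [if_neg hib]
      rcases le_or_gt (w i) 0 with hwi | hwi
      · nlinarith [hupos i hiσ, hspos]
      · have hle := hamin i (Finset.mem_filter.mpr ⟨hiσ, hwi⟩)
        have := (le_div_iff₀ hwi).mp hle
        linarith
  have hσ'good : GoodB α ε σ' := ⟨hcard', hspan', ⟨c', hc'0, hc'ε⟩⟩
  -- cost decreases
  have hz : zval α ε J σ' < zval α ε J σ := by
    rw [zval_eq hσ huε, zval_eq hσ'good hc'ε]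
    rw [hσ', Finset.sum_insert hbea]
    have h1 : ∑ i ∈ σ.erase a, cost i * c' i =
        (∑ i ∈ σ, cost i * (u i - s * w i)) - cost a * (u a - s * w a) := by
      rw [← Finset.add_sum_erase σ (fun i => cost i * (u i - s * w i)) haσ]
      rw [show ∑ i ∈ σ.erase a, cost i * c' i =
        ∑ i ∈ σ.erase a, cost i * (u i - s * w i) from Finset.sum_congr rfl fun i hi => by
          have hib : i ≠ b := fun h => hbea (h ▸ hi)
          rw [hc']; simp [hib]]
      ring
    have h2 : cost a * (u a - s * w a) = 0 := by rw [hsa]; ring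
    have h3 : ∑ i ∈ σ, cost i * (u i - s * w i) =
        (∑ i ∈ σ, cost i * u i) - s * ∑ i ∈ σ, cost i * w i := by
      rw [Finset.mul_sum, ← Finset.sum_sub_distrib]
      exact Finset.sum_congr rfl fun i _ => by ring
    have hcb : c' b = s := by rw [hc']; simp
    rw [hcb, h1, h2, h3]
    have : cost b < ∑ i ∈ σ, cost i * w i := hrc
    nlinarith [hspos]
  -- the congruence modulo the ideal
  have hbc : b ∈ σᶜ := Finset.mem_compl.mpr hbσ
  set R : MvPolynomial (Fin r) ℝ := ∏ i ∈ σᶜ.erase b, linPoly (α i) with hR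
  have hΔσ : ∏ i ∈ σᶜ, linPoly (α i) = linPoly (α b) * R :=
    (Finset.mul_prod_erase σᶜ _ hbc).symm
  have hacompl : a ∉ σᶜ.erase b := fun h => (Finset.mem_compl.mp (Finset.mem_of_mem_erase h)) haσ
  have hcompl : σ'ᶜ = insert a (σᶜ.erase b) := by
    ext x
    simp only [hσ', Finset.mem_compl, Finset.mem_insert, Finset.mem_erase]
    constructor
    · intro hx
      push_neg at hx
      rcases eq_or_ne x a with rfl | hxa
      · exact Or.inl rfl
      · exact Or.inr ⟨hx.1, hx.2 hxa⟩
    · rintro (rfl | ⟨hxb, hxσ⟩)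
      · rintro (h | ⟨h1, h2⟩)
        · exact hbσ (h ▸ haσ)
        · exact h1 rfl
      · rintro (h | ⟨h1, h2⟩)
        · exact hxb h
        · exact hxσ h2
  have hΔσ' : ∏ i ∈ σ'ᶜ, linPoly (α i) = linPoly (α a) * R := by
    rw [hcompl, Finset.prod_insert hacompl]
  have hlinb : linPoly (α b) = ∑ j ∈ σ, C (w j) * linPoly (α j) := by
    rw [hwb, linPoly_finsum]
  have hkey : (∏ i ∈ σᶜ, linPoly (α i)) - w a • (∏ i ∈ σ'ᶜ, linPoly (α i)) =
      ∑ j ∈ σ.erase a, C (w j) * (linPoly (α j) * R) := by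
    rw [hΔσ, hΔσ', hlinb, smul_eq_C_mul, Finset.sum_mul,
      ← Finset.add_sum_erase σ (fun j => C (w j) * linPoly (α j) * R) haσ,
      mul_assoc (C (w a)), add_sub_cancel_left]
    exact Finset.sum_congr rfl fun j _ => mul_assoc _ _ _
  have hmem : ∑ j ∈ σ.erase a, C (w j) * (linPoly (α j) * R) ∈ JKIdeal α ε := by
    refine Ideal.sum_mem _ fun j hj => Ideal.mul_mem_left _ _ ?_
    have hjσ : j ∈ σ := Finset.mem_of_mem_erase hj
    have hja : j ≠ a := (Finset.mem_erase.mp hj).1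
    have hjK : j ∉ σᶜ.erase b := fun h => (Finset.mem_compl.mp (Finset.mem_of_mem_erase h)) hjσ
    have hprod : linPoly (α j) * R = ∏ i ∈ insert j (σᶜ.erase b), linPoly (α i) := by
      rw [Finset.prod_insert hjK]
    have hKc : (insert j (σᶜ.erase b))ᶜ = insert b (σ.erase j) := by
      ext x
      simp only [Finset.mem_compl, Finset.mem_insert, Finset.mem_erase]
      constructor
      · intro hx
        push_neg at hx
        rcases eq_or_ne x b with rfl | hxb
        · exact Or.inl rfl
        · by_cases hxσ : x ∈ σ
          · exact Or.inr ⟨hx.1, hxσ⟩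
          · exact absurd (hx.2 hxb) hxσ
      · rintro (rfl | ⟨hxj, hxσ⟩)
        · rintro (h | ⟨h1, h2⟩)
          · exact hbσ (h ▸ hjσ)
          · exact h1 rfl
        · rintro (h | ⟨h1, h2⟩)
          · exact hxj h
          · exact h2 hxσ
    have hnc : ¬ InCone α (insert j (σᶜ.erase b))ᶜ ε := by
      rw [hKc]
      rintro ⟨t, ht0, htε⟩
      have hbin : b ∉ σ.erase j := fun h => hbσ (Finset.mem_of_mem_erase h)
      rw [Finset.sum_insert hbin] at htε
      set t' : Fin n → ℝ := fun k => t b * w k + (if k = j then 0 else t k) with ht'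
      have hrep : ε = ∑ k ∈ σ, t' k • α k := by
        rw [ht']
        have hsplit : ∑ k ∈ σ, (t b * w k + if k = j then 0 else t k) • α k =
            ∑ k ∈ σ, (t b * w k) • α k + ∑ k ∈ σ, (if k = j then (0:ℝ) else t k) • α k := by
          rw [← Finset.sum_add_distrib]
          exact Finset.sum_congr rfl fun k _ => (add_smul _ _ _)
        rw [hsplit]
        have h1 : ∑ k ∈ σ, (t b * w k) • α k = t b • α b := by
          rw [hwb, Finset.smul_sum]
          exact Finset.sum_congr rfl fun k _ => by rw [smul_smul]
        have h2 : ∑ k ∈ σ, (if k = j then (0:ℝ) else t k) • α k =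
            ∑ k ∈ σ.erase j, t k • α k := by
          have hv : ∀ k ∈ σ, k ∉ σ.erase j → (if k = j then (0:ℝ) else t k) • α k = 0 := by
            intro k hkσ hk
            have hkj : k = j := by
              by_contra hc
              exact hk (Finset.mem_erase.mpr ⟨hc, hkσ⟩)
            rw [if_pos hkj, zero_smul]
          rw [← Finset.sum_subset (Finset.erase_subset j σ) hv]
          exact Finset.sum_congr rfl fun k hk => by rw [if_neg (Finset.mem_erase.mp hk).1]
        rw [h1, h2, htε]
      have huniq := coeff_unique hind (huε.symm.trans hrep)
      have hj' : u j = t b * w j := by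
        have := huniq j hjσ
        rw [ht'] at this
        simpa using this
      have htb0 : 0 ≤ t b := ht0 b (Finset.mem_insert_self _ _)
      have hwj : 0 < w j := by
        by_contra hc
        push_neg at hc
        nlinarith [hupos j hjσ, hj']
      have htb : 0 < t b := by
        by_contra hc
        push_neg at hc
        nlinarith [hupos j hjσ, hj']
      have hlt : s < t b := by
        have h := hstrict j hjσ hwj hja
        rwa [hj', mul_div_cancel_right₀ _ (ne_of_gt hwj)] at h
      have hta : u a = t b * w a + t a := by
        have h := huniq a haσ
        rw [ht'] at h
        simpa [Ne.symm hja] using h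
      have hta0 : 0 ≤ t a :=
        ht0 a (Finset.mem_insert_of_mem (Finset.mem_erase.mpr ⟨Ne.symm hja, haσ⟩))
      nlinarith [hsa, hlt, hwa, hta, hta0, mul_pos (sub_pos.mpr hlt) hwa]
    exact Ideal.subset_span ⟨insert j (σᶜ.erase b), hnc, hprod⟩
  exact ⟨σ', hσ'good, hz, w a, hwa, hkey ▸ hmem⟩

end Aux6
section Aux7
open MvPolynomial
variable {r n : ℕ} {α : Fin n → Fin r → ℝ} {ε : Fin r → ℝ}

open Classical in
/-- Number of good bases of strictly smaller LP cost. -/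
noncomputable def bmeasure (α : Fin n → Fin r → ℝ) (ε : Fin r → ℝ)
    (J σ : Finset (Fin n)) : ℕ :=
  (Finset.univ.filter fun τ : Finset (Fin n) =>
    GoodB α ε τ ∧ zval α ε J τ < zval α ε J σ).card

lemma goodB_delta_mem (hα : ∀ i, α i ≠ 0) (hpol : Polarized α) (hreg : RegularWrt α ε)
    {J : Finset (Fin n)} (hJ : IsConeBasis α J) (hεJ : InCone α J ε) (hJcard : J.card = r) :
    ∀ N : ℕ, ∀ σ : Finset (Fin n), GoodB α ε σ → bmeasure α ε J σ ≤ N →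
      (∏ i ∈ σᶜ, linPoly (α i)) ∈
        (JKIdeal α ε).restrictScalars ℝ ⊔ (ℝ ∙ (∏ i ∈ Jᶜ, linPoly (α i))) := by
  classical
  intro N
  induction N with
  | zero =>
    intro σ hσ hm
    rcases eq_or_ne σ J with rfl | hne
    · exact Submodule.mem_sup_right (Submodule.mem_span_singleton_self _)
    · exfalso
      obtain ⟨σ', hσ', hz, t, ht, hmem⟩ := simplex_step hα hpol hreg hJ hεJ hJcard hσ hne
      have hlt : bmeasure α ε J σ' < bmeasure α ε J σ := by
        apply Finset.card_lt_card
        constructor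
        · intro τ hτ
          rw [Finset.mem_filter] at hτ ⊢
          exact ⟨hτ.1, hτ.2.1, lt_trans hτ.2.2 hz⟩
        · intro hsub
          have h1 : σ' ∈ Finset.univ.filter fun τ : Finset (Fin n) =>
              GoodB α ε τ ∧ zval α ε J τ < zval α ε J σ :=
            Finset.mem_filter.mpr ⟨Finset.mem_univ _, hσ', hz⟩
          have h2 := hsub h1
          rw [Finset.mem_filter] at h2
          exact lt_irrefl _ h2.2.2
      omega
  | succ N ih =>
    intro σ hσ hm
    rcases eq_or_ne σ J with rfl | hne
    · exact Submodule.mem_sup_right (Submodule.mem_span_singleton_self _)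
    · obtain ⟨σ', hσ', hz, t, ht, hmem⟩ := simplex_step hα hpol hreg hJ hεJ hJcard hσ hne
      have hlt : bmeasure α ε J σ' < bmeasure α ε J σ := by
        apply Finset.card_lt_card
        constructor
        · intro τ hτ
          rw [Finset.mem_filter] at hτ ⊢
          exact ⟨hτ.1, hτ.2.1, lt_trans hτ.2.2 hz⟩
        · intro hsub
          have h1 : σ' ∈ Finset.univ.filter fun τ : Finset (Fin n) =>
              GoodB α ε τ ∧ zval α ε J τ < zval α ε J σ :=
            Finset.mem_filter.mpr ⟨Finset.mem_univ _, hσ', hz⟩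
          have h2 := hsub h1
          rw [Finset.mem_filter] at h2
          exact lt_irrefl _ h2.2.2
      have ih' := ih σ' hσ' (by omega)
      have hdecomp : (∏ i ∈ σᶜ, linPoly (α i)) =
          ((∏ i ∈ σᶜ, linPoly (α i)) - t • (∏ i ∈ σ'ᶜ, linPoly (α i))) +
            t • (∏ i ∈ σ'ᶜ, linPoly (α i)) := by
        abel
      rw [hdecomp]
      exact Submodule.add_mem _ (Submodule.mem_sup_left hmem) (Submodule.smul_mem _ _ ih')
end Aux7
section Aux8
open MvPolynomial
variable {r n : ℕ} {α : Fin n → Fin r → ℝ} {ε : Fin r → ℝ}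

lemma prodpow_split_set (K : Finset (Fin n)) (m : Fin n → ℕ) (h : ∀ i ∈ K, 1 ≤ m i) :
    ∏ j, linPoly (α j) ^ m j =
      (∏ j ∈ K, linPoly (α j)) * ∏ j, linPoly (α j) ^ (m j - if j ∈ K then 1 else 0) := by
  classical
  rw [show (∏ j ∈ K, linPoly (α j)) = ∏ j, linPoly (α j) ^ (if j ∈ K then 1 else 0) from ?_,
    ← Finset.prod_mul_distrib]
  · refine Finset.prod_congr rfl fun j _ => ?_
    rw [← pow_add]
    congr 1
    by_cases hj : j ∈ K
    · have := h j hj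
      simp only [if_pos hj]
      omega
    · simp [hj]
  · rw [show (∏ j, linPoly (α j) ^ (if j ∈ K then 1 else 0)) =
        ∏ j, (if j ∈ K then linPoly (α j) else 1) from
      Finset.prod_congr rfl fun j _ => by by_cases hj : j ∈ K <;> simp [hj],
      Finset.prod_ite_mem, Finset.univ_inter]

lemma prodpow_mem_ideal (m : Fin n → ℕ)
    (hK : ¬ InCone α (Finset.univ.filter fun i => 0 < m i)ᶜ ε) :
    (∏ i, linPoly (α i) ^ m i) ∈ JKIdeal α ε := by
  classical
  set K := Finset.univ.filter fun i => 0 < m i with hKdef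
  rw [prodpow_split_set K m (fun i hi => (Finset.mem_filter.mp hi).2)]
  exact Ideal.mul_mem_right _ _ (Ideal.subset_span ⟨K, hK, rfl⟩)

lemma prodpow_split_one (i0 : Fin n) (m : Fin n → ℕ) (h : 1 ≤ m i0) :
    ∏ j, linPoly (α j) ^ m j =
      linPoly (α i0) * ∏ j, linPoly (α j) ^ (m j - if j = i0 then 1 else 0) := by
  classical
  have h1 := prodpow_split_set (α := α) {i0} m (by simpa using h)
  rw [Finset.prod_singleton] at h1
  rw [h1]
  congr 1
  refine Finset.prod_congr rfl fun j _ => ?_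
  congr 1
  simp [Finset.mem_singleton]

lemma prodpow_mem_W (hα : ∀ i, α i ≠ 0) (hpol : Polarized α) (hreg : RegularWrt α ε)
    {J : Finset (Fin n)} (hJ : IsConeBasis α J) (hεJ : InCone α J ε) (hJcard : J.card = r)
    (hrn : r ≤ n) :
    ∀ E : ℕ, ∀ m : Fin n → ℕ, (∑ i, m i) = n - r → (∑ i, (m i - 1)) ≤ E →
      (∏ i, linPoly (α i) ^ m i) ∈
        (JKIdeal α ε).restrictScalars ℝ ⊔ (ℝ ∙ (∏ i ∈ Jᶜ, linPoly (α i))) := by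
  classical
  intro E
  induction E with
  | zero =>
    intro m hsum hE
    -- all multiplicities are ≤ 1
    have hle : ∀ i, m i ≤ 1 := by
      intro i
      have h1 : m i - 1 = 0 := by
        by_contra hc
        have h2 : 0 < ∑ j, (m j - 1) :=
          Finset.sum_pos' (fun j _ => Nat.zero_le _) ⟨i, Finset.mem_univ i,
            Nat.pos_of_ne_zero hc⟩
        omega
      omega
    set K := Finset.univ.filter fun i => 0 < m i with hKdef
    by_cases hC : InCone α Kᶜ ε
    · -- Kᶜ is a good basis
      have hspan : Submodule.span ℝ (α '' ↑(Kᶜ)) = ⊤ := generating_of_inCone hreg hC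
      have hKcard : K.card = n - r := by
        rw [← hsum]
        rw [Finset.card_filter]
        refine (Finset.sum_congr rfl fun i _ => ?_).symm
        have := hle i
        interval_cases h : m i <;> simp
      have hKc : Kᶜ.card = r := by
        rw [Finset.card_compl, Fintype.card_fin, hKcard]
        omega
      have hgood : GoodB α ε Kᶜ := ⟨hKc, hspan, hC⟩
      have heq : (∏ i, linPoly (α i) ^ m i) = ∏ i ∈ (Kᶜ)ᶜ, linPoly (α i) := by
        rw [compl_compl]
        rw [show (∏ i ∈ K, linPoly (α i)) = ∏ i ∈ K, linPoly (α i) ^ m i from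
          Finset.prod_congr rfl fun i hi => by
            rw [show m i = 1 by
              have := (Finset.mem_filter.mp hi).2; have := hle i; omega, pow_one]]
        refine (Finset.prod_subset (Finset.subset_univ K) fun i _ hi => ?_).symm
        have : m i = 0 := by
          by_contra hc
          exact hi (Finset.mem_filter.mpr ⟨Finset.mem_univ i, Nat.pos_of_ne_zero hc⟩)
        rw [this, pow_zero]
      rw [heq]
      exact goodB_delta_mem hα hpol hreg hJ hεJ hJcard (bmeasure α ε J Kᶜ) Kᶜ hgood le_rfl
    · exact Submodule.mem_sup_left (prodpow_mem_ideal m hC)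
  | succ E ih =>
    intro m hsum hE
    set K := Finset.univ.filter fun i => 0 < m i with hKdef
    by_cases hC : InCone α Kᶜ ε
    · by_cases hone : ∀ i, m i ≤ 1
      · -- same as base case: excess is 0
        refine ih m hsum ?_
        have : ∀ i, m i - 1 = 0 := fun i => by have := hone i; omega
        rw [Finset.sum_congr rfl fun i _ => this i]
        simp
      · push_neg at hone
        obtain ⟨i0, hi0⟩ := hone
        have hi0' : 2 ≤ m i0 := hi0
        have hspan : Submodule.span ℝ (α '' ↑(Kᶜ)) = ⊤ := generating_of_inCone hreg hC
        obtain ⟨b, hb⟩ := exists_rep_of_span (α := α) hspan (α i0)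
        -- split off one factor of α i0
        have hsplit := prodpow_split_one (α := α) i0 m (by omega)
        have hlin : linPoly (α i0) = ∑ i ∈ Kᶜ, C (b i) * linPoly (α i) := by
          rw [hb, linPoly_finsum]
        -- new exponent vectors
        set m1 : Fin n → ℕ := fun j => m j - if j = i0 then 1 else 0 with hm1
        have hkey : (∏ j, linPoly (α j) ^ m j) =
            ∑ i ∈ Kᶜ, C (b i) * ∏ j, linPoly (α j) ^ (m1 j + if j = i then 1 else 0) := by
          rw [hsplit, hlin, Finset.sum_mul]
          refine Finset.sum_congr rfl fun i hi => ?_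
          rw [mul_assoc]
          congr 1
          congr 1
          have hmem1 : 1 ≤ m1 i + (if i = i then 1 else 0) := by simp
          rw [prodpow_split_one (α := α) i (fun j => m1 j + if j = i then 1 else 0) hmem1]
          congr 1
          refine Finset.prod_congr rfl fun j _ => ?_
          congr 1
          by_cases hji : j = i <;> simp [hji, hm1]
        rw [hkey]
        refine Submodule.sum_mem _ fun i hi => ?_
        rw [← smul_eq_C_mul]
        refine Submodule.smul_mem _ _ ?_
        have hii0 : i ≠ i0 := by
          intro h
          have : ¬ (0 < m i0) := by
            have := Finset.mem_compl.mp (h ▸ hi)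
            simpa [hKdef] using this
          omega
        refine ih _ ?_ ?_
        · -- sum preserved
          have hs1 : (∑ j, m1 j) + 1 = ∑ j, m j := by
            have h0 : ∑ j, (m1 j + if j = i0 then 1 else 0) = ∑ j, m j := by
              refine Finset.sum_congr rfl fun j _ => ?_
              by_cases hj : j = i0
              · have e1 : m1 j = m j - 1 := by simp [hm1, hj]
                have h2m : 2 ≤ m j := by rw [hj]; exact hi0'
                rw [if_pos hj, e1]
                omega
              · simp [hm1, hj]
            rw [Finset.sum_add_distrib] at h0
            simpa using h0
          have hs2 : ∑ j, (m1 j + if j = i then 1 else 0) = (∑ j, m1 j) + 1 := by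
            rw [Finset.sum_add_distrib]
            simp
          have hs3 : m i0 ≤ ∑ j, m j :=
            Finset.single_le_sum (fun j _ => Nat.zero_le (m j)) (Finset.mem_univ i0)
          rw [hs2]
          omega
        · -- excess decreases
          have hpt : ∀ j, j ≠ i0 → ((m1 j + if j = i then 1 else 0) - 1) ≤ m j - 1 := by
            intro j hj
            by_cases hji : j = i
            · subst hji
              have hmj : m j = 0 := by
                have := Finset.mem_compl.mp hi
                simp only [hKdef, Finset.mem_filter, Finset.mem_univ, true_and] at this
                omega
              simp [hm1, hj, hmj]
            · simp only [if_neg hji, Nat.add_zero, hm1, if_neg hj]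
              omega
          have hi0i : i0 ≠ i := Ne.symm hii0
          have hterm : ((m1 i0 + if i0 = i then 1 else 0) - 1) + 1 ≤ m i0 - 1 := by
            have e1 : m1 i0 = m i0 - 1 := by simp [hm1]
            rw [if_neg hi0i, e1]
            omega
          have hsplitm : (m i0 - 1) + ∑ j ∈ Finset.univ.erase i0, (m j - 1) =
              ∑ j, (m j - 1) :=
            Finset.add_sum_erase _ (fun j => m j - 1) (Finset.mem_univ i0)
          have hsplitm1 : ∑ j, ((m1 j + if j = i then 1 else 0) - 1) =
              ((m1 i0 + if i0 = i then 1 else 0) - 1) +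
              ∑ j ∈ Finset.univ.erase i0, ((m1 j + if j = i then 1 else 0) - 1) :=
            (Finset.add_sum_erase _ (fun j => (m1 j + if j = i then 1 else 0) - 1)
              (Finset.mem_univ i0)).symm
          have hle2 : ∑ j ∈ Finset.univ.erase i0, ((m1 j + if j = i then 1 else 0) - 1) ≤
              ∑ j ∈ Finset.univ.erase i0, (m j - 1) :=
            Finset.sum_le_sum fun j hj => hpt j (Finset.mem_erase.mp hj).1
          omega
    · exact Submodule.mem_sup_left (prodpow_mem_ideal m hC)

end Aux8
section Aux9
open MvPolynomial
variable {r n : ℕ} {α : Fin n → Fin r → ℝ} {ε : Fin r → ℝ}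

/-- Products of `d` of the `α`'s (with multiplicity). -/
def Tset (α : Fin n → Fin r → ℝ) (d : ℕ) : Set (MvPolynomial (Fin r) ℝ) :=
  {Q | ∃ m : Fin n → ℕ, (∑ i, m i) = d ∧ Q = ∏ i, linPoly (α i) ^ m i}

lemma mul_X_mem_span_Tset
    (huniv : Submodule.span ℝ (α '' ↑(Finset.univ : Finset (Fin n))) = ⊤)
    (k : Fin r) {d : ℕ} {x : MvPolynomial (Fin r) ℝ}
    (hx : x ∈ Submodule.span ℝ (Tset α d)) :
    X k * x ∈ Submodule.span ℝ (Tset α (d + 1)) := by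
  classical
  obtain ⟨b, hb⟩ := exists_rep_of_span (α := α) huniv (Pi.single k (1:ℝ))
  have hXk : (X k : MvPolynomial (Fin r) ℝ) = ∑ i, C (b i) * linPoly (α i) := by
    rw [← linPoly_single k, hb, linPoly_finsum]
  induction hx using Submodule.span_induction with
  | mem Q hQ =>
    obtain ⟨m, hm, rfl⟩ := hQ
    have hexp : X k * ∏ i, linPoly (α i) ^ m i =
        ∑ i, b i • ∏ j, linPoly (α j) ^ (m j + if j = i then 1 else 0) := by
      rw [hXk, Finset.sum_mul]
      refine Finset.sum_congr rfl fun i _ => ?_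
      rw [← smul_eq_C_mul, smul_mul_assoc]
      congr 1
      rw [prodpow_split_one (α := α) i (fun j => m j + if j = i then 1 else 0) (by simp)]
      congr 1
      refine Finset.prod_congr rfl fun j _ => ?_
      congr 1
      by_cases hji : j = i <;> simp [hji]
    rw [hexp]
    refine Submodule.sum_mem _ fun i _ => Submodule.smul_mem _ _ (Submodule.subset_span ?_)
    refine ⟨fun j => m j + if j = i then 1 else 0, ?_, rfl⟩
    rw [Finset.sum_add_distrib, hm]
    simp
  | zero => rw [mul_zero]; exact Submodule.zero_mem _
  | add y z _ _ ihy ihz => rw [mul_add]; exact Submodule.add_mem _ ihy ihz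
  | smul a y _ ihy => rw [mul_smul_comm]; exact Submodule.smul_mem _ _ ihy

lemma monomial_mem_span_Tset
    (huniv : Submodule.span ℝ (α '' ↑(Finset.univ : Finset (Fin n))) = ⊤) :
    ∀ d : ℕ, ∀ v : Fin r →₀ ℕ, (v.sum fun _ e => e) = d → ∀ c : ℝ,
      (monomial v c : MvPolynomial (Fin r) ℝ) ∈ Submodule.span ℝ (Tset α d) := by
  intro d
  induction d with
  | zero =>
    intro v hv c
    have hv0 : v = 0 := by
      by_contra hne
      obtain ⟨k, hk⟩ := Finsupp.support_nonempty_iff.mpr hne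
      have : 0 < v.sum fun _ e => e :=
        Finset.sum_pos' (fun i _ => Nat.zero_le _) ⟨k, hk,
          Nat.pos_of_ne_zero (Finsupp.mem_support_iff.mp hk)⟩
      omega
    subst hv0
    have h1 : (monomial (0 : Fin r →₀ ℕ) c : MvPolynomial (Fin r) ℝ) =
        c • ∏ i, linPoly (α i) ^ (0 : Fin n → ℕ) i := by
      simp [smul_eq_C_mul]
    rw [h1]
    exact Submodule.smul_mem _ _ (Submodule.subset_span ⟨0, by simp, rfl⟩)
  | succ d ih =>
    intro v hv c
    have hvne : v ≠ 0 := by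
      intro h
      rw [h] at hv
      simp [Finsupp.sum] at hv
    obtain ⟨k, hk⟩ := Finsupp.support_nonempty_iff.mpr hvne
    have hk1 : 1 ≤ v k := Nat.pos_of_ne_zero (Finsupp.mem_support_iff.mp hk)
    set v' := v - Finsupp.single k 1 with hv'
    have hvv : v' + Finsupp.single k 1 = v :=
      tsub_add_cancel_of_le (Finsupp.single_le_iff.mpr hk1)
    have hsum' : (v'.sum fun _ e => e) = d := by
      have h1 : ((v' + Finsupp.single k 1).sum fun _ e => e) =
          (v'.sum fun _ e => e) + 1 := by
        rw [Finsupp.sum_add_index (by intros; rfl) (by intros; rfl)]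
        simp
      rw [hvv, hv] at h1
      omega
    have hmon : (monomial v c : MvPolynomial (Fin r) ℝ) = X k * monomial v' c := by
      rw [← hvv, monomial_add_single, pow_one, mul_comm]
    rw [hmon]
    exact mul_X_mem_span_Tset huniv k (ih v' hsum' c)

lemma homog_mem_span_Tset
    (huniv : Submodule.span ℝ (α '' ↑(Finset.univ : Finset (Fin n))) = ⊤)
    {d : ℕ} {P : MvPolynomial (Fin r) ℝ} (hP : P.IsHomogeneous d) :
    P ∈ Submodule.span ℝ (Tset α d) := by
  rw [show P = ∑ v ∈ P.support, monomial v (coeff v P) from P.as_sum]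
  refine Submodule.sum_mem _ fun v hv => ?_
  refine monomial_mem_span_Tset huniv d v ?_ _
  have h1 := hP (mem_support_iff.mp hv)
  rw [← h1]
  simp [Finsupp.weight_apply, Finsupp.sum]

lemma homog_mem_W (hα : ∀ i, α i ≠ 0) (hpol : Polarized α) (hreg : RegularWrt α ε)
    {J : Finset (Fin n)} (hJ : IsConeBasis α J) (hεJ : InCone α J ε) (hJcard : J.card = r)
    (hrn : r ≤ n) {P : MvPolynomial (Fin r) ℝ} (hP : P.IsHomogeneous (n - r)) :
    P ∈ (JKIdeal α ε).restrictScalars ℝ ⊔ (ℝ ∙ (∏ i ∈ Jᶜ, linPoly (α i))) := by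
  have huniv : Submodule.span ℝ (α '' ↑(Finset.univ : Finset (Fin n))) = ⊤ := by
    rw [eq_top_iff, ← hJ.2]
    exact Submodule.span_mono (Set.image_mono (by simp))
  have h1 := homog_mem_span_Tset huniv hP
  refine Submodule.span_le.mpr ?_ h1
  rintro Q ⟨m, hm, rfl⟩
  exact prodpow_mem_W hα hpol hreg hJ hεJ hJcard hrn (∑ i, (m i - 1)) m hm le_rfl

lemma coneBasis_card {σ : Finset (Fin n)} (hσ : IsConeBasis α σ) : σ.card = r := by
  have h1 : Fintype.card {x // x ∈ σ} ≤ Module.finrank ℝ (Fin r → ℝ) :=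
    hσ.1.fintype_card_le_finrank
  rw [Fintype.card_coe] at h1
  have h2 : ¬ (σ.card < r) := fun h => span_ne_top_of_card_lt h hσ.2
  have h3 : Module.finrank ℝ (Fin r → ℝ) = r := by simp
  omega

end Aux9
section Final
open MvPolynomial

lemma emb_sub {r : ℕ} (p q : MvPolynomial (Fin r) ℝ) : emb (p - q) = emb p - emb q := by
  unfold emb; exact map_sub _ _ _

/-- **Jeffrey–Kirwan residue via normal forms.** With `N_P, N_Δ` normal forms of `P` and
`Δ = ∏_{i∉J} αᵢ` with respect to `I_{𝔄,ε}`, one has `N_Δ ≠ 0` and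
`√(det[⟨αⱼ,α_k⟩]_{j,k∈J}) · λ(P/∏ᵢαᵢ) · N_Δ = N_P`. -/
theorem jk_residue_via_normal_forms {r n : ℕ} (hrn : r ≤ n)
    (α : Fin n → Fin r → ℝ) (hα : ∀ i, α i ≠ 0) (hpol : Polarized α)
    (ε : Fin r → ℝ) (hreg : RegularWrt α ε)
    (J : Finset (Fin n)) (hJ : IsConeBasis α J) (hεJ : InCone α J ε)
    (lam : Frac r →ₗ[ℝ] ℝ) (hlam : IsJKFunctional α ε lam)
    (o : MonomialOrd r)
    (P : MvPolynomial (Fin r) ℝ) (hP : P.IsHomogeneous (n - r))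
    (NP NΔ : MvPolynomial (Fin r) ℝ)
    (hNP : IsNormalForm o (JKIdeal α ε) P NP)
    (hNΔ : IsNormalForm o (JKIdeal α ε) (∏ i ∈ Jᶜ, linPoly (α i)) NΔ) :
    NΔ ≠ 0 ∧
      C (Real.sqrt (gram α J) * lam (emb P / ∏ i, emb (linPoly (α i)))) * NΔ = NP := by
  classical
  have hJcard : J.card = r := coneBasis_card hJ
  have hg : 0 < gram α J := gram_pos hJcard hJ.1
  have hsg : Real.sqrt (gram α J) ≠ 0 := ne_of_gt (Real.sqrt_pos.mpr hg)
  have hdel := lam_delta hα hlam hJ hεJ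
  -- NΔ ≠ 0
  have hNΔne : NΔ ≠ 0 := by
    intro h0
    have h1 : (∏ i ∈ Jᶜ, linPoly (α i)) ∈ JKIdeal α ε := by
      have := hNΔ.1
      rwa [h0, sub_zero] at this
    have h2 := lam_vanish_ideal hα hlam h1
    rw [hdel] at h2
    exact (one_div_ne_zero hsg) h2
  -- decomposition P = y + c₀ • Δ with y ∈ I
  have hPW := homog_mem_W hα hpol hreg hJ hεJ hJcard hrn hP
  rw [Submodule.mem_sup] at hPW
  obtain ⟨y, hy, z, hz, hyz⟩ := hPW
  obtain ⟨c₀, rfl⟩ := Submodule.mem_span_singleton.mp hz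
  have hPmc : P - c₀ • (∏ i ∈ Jᶜ, linPoly (α i)) ∈ JKIdeal α ε := by
    rw [show P - c₀ • (∏ i ∈ Jᶜ, linPoly (α i)) = y from by rw [← hyz]; abel]
    exact hy
  -- compute lam (emb P / ∏)
  have hlamP : lam (emb P / ∏ i, emb (linPoly (α i))) = c₀ / Real.sqrt (gram α J) := by
    have h1 : emb P / (∏ i, emb (linPoly (α i))) =
        emb (P - c₀ • (∏ i ∈ Jᶜ, linPoly (α i))) / (∏ i, emb (linPoly (α i))) +
          c₀ • (emb (∏ i ∈ Jᶜ, linPoly (α i)) / (∏ i, emb (linPoly (α i)))) := by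
      rw [emb_sub, emb_smul, sub_div, smul_div_assoc]
      abel
    rw [h1, map_add, lam_vanish_ideal hα hlam hPmc, map_smul, hdel, zero_add,
      smul_eq_mul, mul_one_div]
  have hc : Real.sqrt (gram α J) * lam (emb P / ∏ i, emb (linPoly (α i))) = c₀ := by
    rw [hlamP]
    field_simp
  refine ⟨hNΔne, ?_⟩
  rw [hc]
  -- normal-form uniqueness argument
  have hE : C c₀ * NΔ - NP ∈ JKIdeal α ε := by
    have h1 : P - NP ∈ JKIdeal α ε := hNP.1
    have h2 : (∏ i ∈ Jᶜ, linPoly (α i)) - NΔ ∈ JKIdeal α ε := hNΔ.1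
    have h3 : c₀ • ((∏ i ∈ Jᶜ, linPoly (α i)) - NΔ) ∈ JKIdeal α ε := by
      rw [smul_eq_C_mul]
      exact Ideal.mul_mem_left _ _ h2
    have h4 : C c₀ * NΔ - NP =
        ((P - NP) - (P - c₀ • (∏ i ∈ Jᶜ, linPoly (α i)))) -
          c₀ • ((∏ i ∈ Jᶜ, linPoly (α i)) - NΔ) := by
      rw [smul_sub, smul_eq_C_mul, smul_eq_C_mul]
      ring
    rw [h4]
    exact Submodule.sub_mem _ (Submodule.sub_mem _ h1 hPmc) h3
  have hEz : C c₀ * NΔ - NP = 0 := by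
    refine eq_zero_of_support_avoid o _ hE fun m hm => ?_
    have hsub : (C c₀ * NΔ - NP).support ⊆ (C c₀ * NΔ).support ∪ NP.support :=
      MvPolynomial.support_sub _ _ _
    rcases Finset.mem_union.mp (hsub hm) with h | h
    · have hsub2 : (C c₀ * NΔ).support ⊆ NΔ.support := by
        rw [← smul_eq_C_mul]
        exact MvPolynomial.support_smul
      exact hNΔ.2 m (hsub2 h)
    · exact hNP.2 m h
  exact sub_eq_zero.mp hEz

end Final
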